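/- Let p be a prime, let k be an integer with 1 ≤ k ≤ p − 1, and let α be a nonzero element of F_p. If k is even, then N_k^*(0) = N_k^*(α) + 1; if k is odd, then N_k^*(0) = N_k^*(α) − 1. -/

import Mathlib

/-- `N_k^*(α)`: the number of `k`-element subsets of `F_p \ {0}` whose
elements sum to `α`. -/
noncomputable def Nstar (p k : ℕ) (α : ZMod p) : ℕ :=
  {A : Finset (ZMod p) | (0 : ZMod p) ∉ A ∧ A.card = k ∧ (∑ a ∈ A, a) = α}.ncard

noncomputable def Ntot (p k : ℕ) (α : ZMod p) : ℕ :=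
  {A : Finset (ZMod p) | A.card = k ∧ (∑ a ∈ A, a) = α}.ncard

-- scaling: Nstar same for all nonzero α
lemma Nstar_scale (p : ℕ) (hp : p.Prime) (k : ℕ) (α β : ZMod p) (hα : α ≠ 0) (hβ : β ≠ 0) :
    Nstar p k α = Nstar p k β := by
  haveI : Fact p.Prime := ⟨hp⟩
  -- generic subset lemma
  have key : ∀ c : ZMod p, c ≠ 0 → ∀ γ : ZMod p,
      (Finset.image (fun x => c * x)) ''
        {A : Finset (ZMod p) | (0:ZMod p) ∉ A ∧ A.card = k ∧ (∑ a ∈ A, a) = γ} ⊆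
      {A : Finset (ZMod p) | (0:ZMod p) ∉ A ∧ A.card = k ∧ (∑ a ∈ A, a) = c * γ} := by
    rintro c hc γ _ ⟨A, ⟨h0, hcard, hsum⟩, rfl⟩
    have hinj : Function.Injective (fun x : ZMod p => c * x) :=
      fun x y h => mul_left_cancel₀ hc h
    refine ⟨?_, ?_, ?_⟩
    · simp only [Finset.mem_image, not_exists]
      rintro x ⟨hx, hx0⟩
      have : x = 0 := by
        rcases mul_eq_zero.1 hx0 with h | h
        · exact absurd h hc
        · exact h
      exact h0 (this ▸ hx)
    · rw [Finset.card_image_of_injective _ hinj, hcard]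
    · rw [Finset.sum_image (fun x _ y _ h => hinj h), ← Finset.mul_sum, hsum]
  set c : ZMod p := β * α⁻¹ with hc
  have hc0 : c ≠ 0 := mul_ne_zero hβ (inv_ne_zero hα)
  have hinj : Function.Injective (fun x : ZMod p => c * x) :=
    fun x y h => mul_left_cancel₀ hc0 h
  have hcα : c * α = β := by
    rw [hc, mul_assoc, inv_mul_cancel₀ hα, mul_one]
  have hcinv : c⁻¹ * β = α := by
    field_simp [hc]
    exact hcα.symm
  have h1 := key c hc0 α
  have h2 := key c⁻¹ (inv_ne_zero hc0) β
  rw [hcα] at h1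
  rw [hcinv] at h2
  have heq : (Finset.image (fun x => c * x)) ''
        {A : Finset (ZMod p) | (0:ZMod p) ∉ A ∧ A.card = k ∧ (∑ a ∈ A, a) = α} =
      {A : Finset (ZMod p) | (0:ZMod p) ∉ A ∧ A.card = k ∧ (∑ a ∈ A, a) = β} := by
    refine h1.antisymm ?_
    intro B hB
    refine ⟨(Finset.image (fun x => c⁻¹ * x)) B, h2 ⟨B, hB, rfl⟩, ?_⟩
    rw [Finset.image_image]
    have : ((fun x => c * x) ∘ fun x => c⁻¹ * x) = id := by
      funext x; simp [← mul_assoc, mul_inv_cancel₀ hc0]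
    rw [this, Finset.image_id]
  unfold Nstar
  rw [← heq, Set.ncard_image_of_injective _ (Finset.image_injective hinj)]

-- split: Ntot = Nstar k + Nstar (k-1)  (k ≥ 1)
lemma Ntot_split (p : ℕ) (hp : p.Prime) (k : ℕ) (hk : 1 ≤ k) (α : ZMod p) :
    Ntot p (k) α = Nstar p k α + Nstar p (k-1) α := by
  haveI : Fact p.Prime := ⟨hp⟩
  haveI : NeZero p := ⟨hp.pos.ne'⟩
  have hsplit : {A : Finset (ZMod p) | A.card = k ∧ (∑ a ∈ A, a) = α} =
      {A : Finset (ZMod p) | (0:ZMod p) ∉ A ∧ A.card = k ∧ (∑ a ∈ A, a) = α} ∪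
      {A : Finset (ZMod p) | (0:ZMod p) ∈ A ∧ A.card = k ∧ (∑ a ∈ A, a) = α} := by
    ext A
    simp only [Set.mem_setOf_eq, Set.mem_union]
    tauto
  have hdisj : Disjoint
      {A : Finset (ZMod p) | (0:ZMod p) ∉ A ∧ A.card = k ∧ (∑ a ∈ A, a) = α}
      {A : Finset (ZMod p) | (0:ZMod p) ∈ A ∧ A.card = k ∧ (∑ a ∈ A, a) = α} := by
    rw [Set.disjoint_left]
    rintro A ⟨h1, _⟩ ⟨h2, _⟩
    exact h1 h2
  have hins : (fun B : Finset (ZMod p) => insert (0:ZMod p) B) ''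
      {B : Finset (ZMod p) | (0:ZMod p) ∉ B ∧ B.card = k - 1 ∧ (∑ a ∈ B, a) = α} =
      {A : Finset (ZMod p) | (0:ZMod p) ∈ A ∧ A.card = k ∧ (∑ a ∈ A, a) = α} := by
    ext A
    constructor
    · rintro ⟨B, ⟨h0, hcard, hsum⟩, rfl⟩
      refine ⟨Finset.mem_insert_self _ _, ?_, ?_⟩
      · rw [Finset.card_insert_of_notMem h0, hcard]; omega
      · rw [Finset.sum_insert h0, hsum, zero_add]
    · rintro ⟨h0, hcard, hsum⟩
      refine ⟨A.erase 0, ⟨Finset.notMem_erase _ _, ?_, ?_⟩, ?_⟩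
      · rw [Finset.card_erase_of_mem h0, hcard]
      · rw [← hsum]
        exact Finset.sum_erase _ rfl
      · exact Finset.insert_erase h0
  have hInj : Set.InjOn (fun B : Finset (ZMod p) => insert (0:ZMod p) B)
      {B : Finset (ZMod p) | (0:ZMod p) ∉ B ∧ B.card = k - 1 ∧ (∑ a ∈ B, a) = α} := by
    rintro B ⟨hB, _⟩ C ⟨hC, _⟩ h
    have : (insert (0:ZMod p) B).erase 0 = (insert (0:ZMod p) C).erase 0 := by
      simp only at h; rw [h]
    rwa [Finset.erase_insert hB, Finset.erase_insert hC] at this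
  unfold Ntot Nstar
  rw [hsplit, Set.ncard_union_eq hdisj (Set.toFinite _) (Set.toFinite _), ← hins,
    Set.ncard_image_of_injOn hInj]

-- translation: Ntot independent of α when (k : ZMod p) ≠ 0
lemma Ntot_translate (p : ℕ) (hp : p.Prime) (k : ℕ) (hk : (k : ZMod p) ≠ 0)
    (α β : ZMod p) : Ntot p k α = Ntot p k β := by
  haveI : Fact p.Prime := ⟨hp⟩
  have key : ∀ t γ : ZMod p,
      (Finset.image (fun x => x + t)) ''
        {A : Finset (ZMod p) | A.card = k ∧ (∑ a ∈ A, a) = γ} ⊆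
      {A : Finset (ZMod p) | A.card = k ∧ (∑ a ∈ A, a) = γ + k * t} := by
    rintro t γ _ ⟨A, ⟨hcard, hsum⟩, rfl⟩
    have hinj : Function.Injective (fun x : ZMod p => x + t) := add_left_injective t
    refine ⟨?_, ?_⟩
    · rw [Finset.card_image_of_injective _ hinj, hcard]
    · rw [Finset.sum_image (fun x _ y _ h => hinj h), Finset.sum_add_distrib,
        hsum, Finset.sum_const, hcard, nsmul_eq_mul]
  set t : ZMod p := (β - α) * (k : ZMod p)⁻¹ with ht
  have hkt : α + (k : ZMod p) * t = β := by
    rw [ht, mul_comm (β - α), ← mul_assoc, mul_inv_cancel₀ hk, one_mul]; ring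
  have hkt' : β + (k : ZMod p) * (-t) = α := by
    rw [← hkt]; ring
  have h1 := key t α
  have h2 := key (-t) β
  rw [hkt] at h1
  rw [hkt'] at h2
  have hinj : Function.Injective (fun x : ZMod p => x + t) := add_left_injective t
  have heq : (Finset.image (fun x => x + t)) ''
        {A : Finset (ZMod p) | A.card = k ∧ (∑ a ∈ A, a) = α} =
      {A : Finset (ZMod p) | A.card = k ∧ (∑ a ∈ A, a) = β} := by
    refine h1.antisymm ?_
    intro B hB
    refine ⟨(Finset.image (fun x => x + (-t))) B, h2 ⟨B, hB, rfl⟩, ?_⟩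
    rw [Finset.image_image]
    have : ((fun x => x + t) ∘ fun x => x + (-t)) = id := by
      funext x; simp
    rw [this, Finset.image_id]
  unfold Ntot
  rw [← heq, Set.ncard_image_of_injective _ (Finset.image_injective hinj)]

lemma Nstar_one_zero (p : ℕ) : Nstar p 1 0 = 0 := by
  unfold Nstar
  convert Set.ncard_empty (Finset (ZMod p))
  ext A
  simp only [Set.mem_setOf_eq, Set.mem_empty_iff_false, iff_false, not_and]
  intro h0 hcard hsum
  obtain ⟨a, rfl⟩ := Finset.card_eq_one.1 hcard
  rw [Finset.sum_singleton] at hsum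
  exact h0 (by simp [hsum])

lemma Nstar_one (p : ℕ) (α : ZMod p) (hα : α ≠ 0) : Nstar p 1 α = 1 := by
  unfold Nstar
  convert Set.ncard_singleton ({α} : Finset (ZMod p))
  ext A
  simp only [Set.mem_setOf_eq, Set.mem_singleton_iff]
  constructor
  · rintro ⟨h0, hcard, hsum⟩
    obtain ⟨a, rfl⟩ := Finset.card_eq_one.1 hcard
    rw [Finset.sum_singleton] at hsum
    rw [hsum]
  · rintro rfl
    exact ⟨by simpa using hα.symm, Finset.card_singleton _, Finset.sum_singleton _ _⟩

lemma Nstar_diff (p : ℕ) (hp : p.Prime) :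
    ∀ k, 1 ≤ k → k ≤ p - 1 → ∀ α : ZMod p, α ≠ 0 →
      (Nstar p k 0 : ℤ) - Nstar p k α = (-1) ^ k := by
  intro k hk1
  induction k, hk1 using Nat.le_induction with
  | base =>
    intro _ α hα
    rw [Nstar_one_zero, Nstar_one p α hα]
    simp
  | succ k hk IH =>
    intro hk2 α hα
    haveI : NeZero p := ⟨hp.pos.ne'⟩
    have hp2 : 2 ≤ p := hp.two_le
    have hne : ((k + 1 : ℕ) : ZMod p) ≠ 0 := by
      intro h
      have hdvd : p ∣ k + 1 := (ZMod.natCast_eq_zero_iff _ _).1 h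
      have := Nat.le_of_dvd (by omega) hdvd
      omega
    have e0 := Ntot_split p hp (k+1) (by omega) 0
    have eα := Ntot_split p hp (k+1) (by omega) α
    have et := Ntot_translate p hp (k+1) hne 0 α
    simp only [Nat.add_sub_cancel] at e0 eα
    have ih := IH (by omega) α hα
    have : (Nstar p (k+1) 0 : ℤ) + Nstar p k 0 = Nstar p (k+1) α + Nstar p k α := by
      rw [e0, eα] at et
      exact_mod_cast et
    rw [pow_succ]
    linarith

/-- For a prime `p`, `1 ≤ k ≤ p - 1`, and nonzero `α ∈ F_p`:
if `k` is even then `N_k^*(0) = N_k^*(α) + 1`, and if `k` is odd then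
`N_k^*(0) = N_k^*(α) - 1` (i.e. `N_k^*(0) + 1 = N_k^*(α)`). -/
theorem Nstar_zero_eq
    (p : ℕ) (hp : p.Prime) (k : ℕ) (hk1 : 1 ≤ k) (hk2 : k ≤ p - 1)
    (α : ZMod p) (hα : α ≠ 0) :
    (Even k → Nstar p k 0 = Nstar p k α + 1) ∧
    (Odd k → Nstar p k 0 + 1 = Nstar p k α) := by
  have hd := Nstar_diff p hp k hk1 hk2 α hα
  constructor
  · intro he
    rw [he.neg_one_pow] at hd
    omega
  · intro ho
    rw [ho.neg_one_pow] at hd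
    omega
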